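/- Let P be a row-finite infinite matrix over a commutative ring R, with output matrix A defined by a_{nk} = (P^n)_{0k}, and let B be a lower-triangular matrix with invertible diagonal entries. Then A*B = b_{00} * O(B^{-1} P B), where O(Q) denotes the output matrix of Q, i.e. O(Q)_{nk} = (Q^n)_{0k}. -/
import Mathlib


/-- Product of infinite matrices, defined via `finsum` (the sum is a genuine
finite sum whenever, e.g., the left factor is row-finite or the right factor is
column-finite). -/
noncomputable def fMul {R : Type*} [CommRing R] (P Q : ℕ → ℕ → R) : ℕ → ℕ → R :=
  fun i k => ∑ᶠ j, P i j * Q j k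

/-- Powers of an infinite matrix. -/
noncomputable def fPow {R : Type*} [CommRing R] (P : ℕ → ℕ → R) : ℕ → ℕ → ℕ → R
  | 0 => fun i j => if i = j then 1 else 0
  | n + 1 => fMul (fPow P n) P

/-- The identity infinite matrix. -/
def idMat (R : Type*) [CommRing R] : ℕ → ℕ → R := fun i j => if i = j then 1 else 0

/-- The output matrix of a production matrix `P`: `O(P)_{nk} = (P^n)_{0k}`. -/
noncomputable def outputMat {R : Type*} [CommRing R] (P : ℕ → ℕ → R) : ℕ → ℕ → R :=
  fun n k => fPow P n 0 k

section Aux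

variable {R : Type*} [CommRing R]

lemma fMul_id_left (X : ℕ → ℕ → R) : fMul (idMat R) X = X := by
  funext i k
  show ∑ᶠ j, (if i = j then (1 : R) else 0) * X j k = X i k
  rw [finsum_eq_single _ i]
  · simp
  · intro j hj
    simp [Ne.symm hj]

lemma rowFin_fMul {X Y : ℕ → ℕ → R} (hX : ∀ i, (Function.support (X i)).Finite)
    (hY : ∀ i, (Function.support (Y i)).Finite) (i : ℕ) :
    (Function.support (fMul X Y i)).Finite := by
  apply Set.Finite.subset ((hX i).biUnion (fun j _ => hY j))
  intro k hk
  simp only [Function.mem_support] at hk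
  by_contra hmem
  apply hk
  apply finsum_eq_zero_of_forall_eq_zero
  intro j
  by_cases hj : X i j = 0
  · simp [hj]
  · have : Y j k = 0 := by
      by_contra hY0
      exact hmem (Set.mem_biUnion hj hY0)
    simp [this]

lemma fMul_assoc {X Y : ℕ → ℕ → R} (Z : ℕ → ℕ → R)
    (hX : ∀ i, (Function.support (X i)).Finite)
    (hY : ∀ i, (Function.support (Y i)).Finite) :
    fMul (fMul X Y) Z = fMul X (fMul Y Z) := by
  classical
  funext i l
  set S : Finset ℕ := (hX i).toFinset with hS
  set T : Finset ℕ := S.biUnion (fun j => (hY j).toFinset) with hT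
  have hXS : ∀ j, j ∉ S → X i j = 0 := by
    intro j hj
    by_contra h
    exact hj ((hX i).mem_toFinset.2 h)
  have hYT : ∀ j k, j ∈ S → k ∉ T → Y j k = 0 := by
    intro j k hj hk
    by_contra h
    exact hk (Finset.mem_biUnion.2 ⟨j, hj, (hY j).mem_toFinset.2 h⟩)
  have hinner : ∀ k, fMul X Y i k = ∑ j ∈ S, X i j * Y j k := by
    intro k
    apply finsum_eq_finset_sum_of_support_subset
    intro j hj
    simp only [Function.mem_support] at hj
    by_contra hjS
    exact hj (by rw [hXS j hjS, zero_mul])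
  have hL : fMul (fMul X Y) Z i l = ∑ k ∈ T, (∑ j ∈ S, X i j * Y j k) * Z k l := by
    show (∑ᶠ k, fMul X Y i k * Z k l) = _
    rw [show (fun k => fMul X Y i k * Z k l)
        = fun k => (∑ j ∈ S, X i j * Y j k) * Z k l from funext fun k => by rw [hinner]]
    apply finsum_eq_finset_sum_of_support_subset
    intro k hk
    simp only [Function.mem_support] at hk
    by_contra hkT
    apply hk
    rw [Finset.sum_eq_zero, zero_mul]
    intro j hj
    rw [hYT j k hj hkT, mul_zero]
  rw [hL]
  have hR : fMul X (fMul Y Z) i l = ∑ j ∈ S, X i j * fMul Y Z j l := by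
    apply finsum_eq_finset_sum_of_support_subset
    intro j hj
    simp only [Function.mem_support] at hj
    by_contra hjS
    exact hj (by rw [hXS j hjS, zero_mul])
  rw [hR]
  have : ∀ j ∈ S, fMul Y Z j l = ∑ k ∈ T, Y j k * Z k l := by
    intro j hj
    apply finsum_eq_finset_sum_of_support_subset
    intro k hk
    simp only [Function.mem_support] at hk
    by_contra hkT
    exact hk (by rw [hYT j k hj hkT, zero_mul])
  rw [show (∑ j ∈ S, X i j * fMul Y Z j l) = ∑ j ∈ S, X i j * ∑ k ∈ T, Y j k * Z k l
    from Finset.sum_congr rfl fun j hj => by rw [this j hj]]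
  simp_rw [Finset.sum_mul, Finset.mul_sum, mul_assoc]
  exact Finset.sum_comm

end Aux

/-- Production matrix of a product: if `P` is row-finite with output matrix
`A = O(P)`, and `B` is lower-triangular with invertible diagonal entries and
(two-sided) inverse `C = B⁻¹`, then `A * B = B₀₀ • O(B⁻¹ P B)`. -/
theorem production_matrix_of_product {R : Type*} [CommRing R]
    (P : ℕ → ℕ → R) (hP : ∀ i, (Function.support (P i)).Finite)
    (B C : ℕ → ℕ → R)
    (hBlt : ∀ i j, i < j → B i j = 0)
    (hBdiag : ∀ i, IsUnit (B i i))
    (hBC : fMul B C = idMat R) (hCB : fMul C B = idMat R) :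
    fMul (outputMat P) B = fun n k => B 0 0 * outputMat (fMul C (fMul P B)) n k := by
  classical
  -- C is lower triangular
  have hClt : ∀ i j, i < j → C i j = 0 := by
    intro i
    induction i using Nat.strong_induction_on with
    | _ i IH =>
      intro j hij
      have h1 : fMul B C i j = 0 := by
        rw [hBC]
        simp [idMat, Nat.ne_of_lt hij]
      have h2 : fMul B C i j = ∑ l ∈ Finset.range (i + 1), B i l * C l j := by
        apply finsum_eq_finset_sum_of_support_subset
        intro l hl
        simp only [Function.mem_support] at hl
        by_contra hlr
        have hil : i < l := by
          have := Finset.mem_range.not.1 hlr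
          omega
        exact hl (by rw [hBlt i l hil, zero_mul])
      have h3 : ∑ l ∈ Finset.range (i + 1), B i l * C l j = B i i * C i j := by
        apply Finset.sum_eq_single_of_mem i (Finset.mem_range.2 (Nat.lt_succ_self i))
        intro l hl hne
        have hli : l < i := lt_of_le_of_ne (Nat.lt_succ_iff.1 (Finset.mem_range.1 hl)) hne
        rw [IH l hli j (lt_trans hli hij), mul_zero]
      have : B i i * C i j = 0 := by rw [← h3, ← h2, h1]
      exact ((hBdiag i).mul_right_eq_zero).1 this
  -- row-finiteness facts
  have hBrf : ∀ i, (Function.support (B i)).Finite := by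
    intro i
    apply Set.Finite.subset (Set.finite_Iic i)
    intro j hj
    simp only [Function.mem_support] at hj
    by_contra hji
    exact hj (hBlt i j (by simpa using hji))
  have hCrf : ∀ i, (Function.support (C i)).Finite := by
    intro i
    apply Set.Finite.subset (Set.finite_Iic i)
    intro j hj
    simp only [Function.mem_support] at hj
    by_contra hji
    exact hj (hClt i j (by simpa using hji))
  have hPow : ∀ n i, (Function.support (fPow P n i)).Finite := by
    intro n
    induction n with
    | zero =>
      intro i
      apply Set.Finite.subset (Set.finite_singleton i)
      intro j hj
      simp only [Function.mem_support, fPow] at hj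
      by_contra hji
      exact hj (if_neg (by simpa [eq_comm] using hji))
    | succ n ih => exact rowFin_fMul ih hP
  -- powers of the conjugated matrix
  have hQpow : ∀ n, fPow (fMul C (fMul P B)) n = fMul C (fMul (fPow P n) B) := by
    intro n
    induction n with
    | zero =>
      show idMat R = fMul C (fMul (idMat R) B)
      rw [fMul_id_left, hCB]
    | succ n ih =>
      show fMul (fPow (fMul C (fMul P B)) n) (fMul C (fMul P B))
          = fMul C (fMul (fMul (fPow P n) P) B)
      rw [ih, fMul_assoc _ hCrf (rowFin_fMul (hPow n) hBrf),
        fMul_assoc _ (hPow n) hBrf, ← fMul_assoc _ hBrf hCrf, hBC, fMul_id_left,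
        ← fMul_assoc _ (hPow n) hP]
  -- the (0,0) entries multiply to 1
  have hBC00 : B 0 0 * C 0 0 = 1 := by
    have h := congrFun (congrFun hBC 0) 0
    rw [show fMul B C 0 0 = ∑ᶠ l, B 0 l * C l 0 from rfl,
      finsum_eq_single _ 0 (fun l hl => by
        rw [hBlt 0 l (Nat.pos_of_ne_zero hl), zero_mul])] at h
    simpa [idMat] using h
  funext n k
  have h1 : outputMat (fMul C (fMul P B)) n k = ∑ᶠ j, C 0 j * fMul (fPow P n) B j k := by
    show fPow (fMul C (fMul P B)) n 0 k = _
    rw [hQpow n]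
    rfl
  rw [h1, finsum_eq_single _ 0 (fun j hj => by
    rw [hClt 0 j (Nat.pos_of_ne_zero hj), zero_mul])]
  show fMul (fPow P n) B 0 k = B 0 0 * (C 0 0 * fMul (fPow P n) B 0 k)
  rw [← mul_assoc, hBC00, one_mul]
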